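/- Let N ≥ 1 and for each k in a finite index set let ν_{jk} (j = 1,…,N) be Borel probability measures on ℝ² with finite second moments, writing (x, p) for the two coordinates on ℝ². Let q_k ≥ 0 with Σ_k q_k = 1, and let μ = Σ_k q_k (⊗_{j=1}^N ν_{jk}) be the corresponding finite mixture of product probability measures on (ℝ²)^N. Assume that for every j and k the coordinate variances satisfy Var_{ν_{jk}}(x) + Var_{ν_{jk}}(p) ≥ 1/2. Then the random variables u = Σ_{j=1}^N x_j and v = Σ_{j=1}^N (−1)^j p_j on (ℝ²)^N satisfy Var_μ(u) + Var_μ(v) ≥ N/2. -/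

import Mathlib

open MeasureTheory BigOperators

noncomputable section

/-- Variance of a real-valued function: `Var_μ(f) = ∫ f² dμ − (∫ f dμ)²`. -/
def Var {α : Type} [MeasurableSpace α] (μ : Measure α) (f : α → ℝ) : ℝ :=
  ∫ x, f x ^ 2 ∂μ - (∫ x, f x ∂μ) ^ 2

lemma pi_integral_prod {N : ℕ} (ν : Fin N → Measure (ℝ × ℝ))
    [∀ j, IsProbabilityMeasure (ν j)] (f : Fin N → (ℝ × ℝ) → ℝ) :
    ∫ x : Fin N → ℝ × ℝ, ∏ j, f j (x j) ∂(Measure.pi ν) = ∏ j, ∫ y, f j y ∂(ν j) :=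
  MeasureTheory.integral_fin_nat_prod_eq_prod (μ := ν) f

lemma pi_integrable_prod {N : ℕ} (ν : Fin N → Measure (ℝ × ℝ))
    [∀ j, IsProbabilityMeasure (ν j)] (f : Fin N → (ℝ × ℝ) → ℝ)
    (hf : ∀ j, Integrable (f j) (ν j)) :
    Integrable (fun x : Fin N → ℝ × ℝ => ∏ j, f j (x j)) (Measure.pi ν) :=
  MeasureTheory.Integrable.fin_nat_prod (μ := ν) hf

section Coord

variable {N : ℕ} (ν : Fin N → Measure (ℝ × ℝ)) [∀ j, IsProbabilityMeasure (ν j)]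

lemma pi_integral_coord (i : Fin N) (f : (ℝ × ℝ) → ℝ) :
    ∫ x : Fin N → ℝ × ℝ, f (x i) ∂(Measure.pi ν) = ∫ y, f y ∂(ν i) := by
  classical
  set g : Fin N → (ℝ × ℝ) → ℝ := Function.update (fun _ _ => (1 : ℝ)) i f with hg
  have h1 : ∀ x : Fin N → ℝ × ℝ, f (x i) = ∏ j, g j (x j) := by
    intro x
    rw [Finset.prod_eq_single i (fun b _ hb => by simp [hg, Function.update_of_ne hb])
      (by simp)]
    simp [hg]
  have h2 : ∏ j, ∫ y, g j y ∂(ν j) = ∫ y, f y ∂(ν i) := by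
    rw [Finset.prod_eq_single i (fun b _ hb => by simp [hg, Function.update_of_ne hb])
      (by simp)]
    simp [hg]
  simp_rw [h1]
  rw [pi_integral_prod ν g, h2]

lemma pi_integrable_coord (i : Fin N) (f : (ℝ × ℝ) → ℝ) (hf : Integrable f (ν i)) :
    Integrable (fun x : Fin N → ℝ × ℝ => f (x i)) (Measure.pi ν) := by
  classical
  set g : Fin N → (ℝ × ℝ) → ℝ := Function.update (fun _ _ => (1 : ℝ)) i f with hg
  have h1 : ∀ x : Fin N → ℝ × ℝ, f (x i) = ∏ j, g j (x j) := by
    intro x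
    rw [Finset.prod_eq_single i (fun b _ hb => by simp [hg, Function.update_of_ne hb])
      (by simp)]
    simp [hg]
  have : Integrable (fun x : Fin N → ℝ × ℝ => ∏ j, g j (x j)) (Measure.pi ν) := by
    apply pi_integrable_prod
    intro j
    rcases eq_or_ne j i with rfl | hj
    · simpa [hg] using hf
    · simp only [hg, Function.update_of_ne hj]
      exact integrable_const 1
  exact this.congr (Filter.Eventually.of_forall fun x => (h1 x).symm)

lemma pi_integral_mul {i j : Fin N} (hij : i ≠ j) (f h : (ℝ × ℝ) → ℝ) :
    ∫ x : Fin N → ℝ × ℝ, f (x i) * h (x j) ∂(Measure.pi ν)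
      = (∫ y, f y ∂(ν i)) * ∫ y, h y ∂(ν j) := by
  classical
  set g : Fin N → (ℝ × ℝ) → ℝ :=
    Function.update (Function.update (fun _ _ => (1 : ℝ)) i f) j h with hg
  have hgi : g i = f := by
    rw [hg, Function.update_of_ne hij, Function.update_self]
  have hgj : g j = h := by rw [hg, Function.update_self]
  have hother : ∀ l, l ≠ i → l ≠ j → g l = fun _ => (1 : ℝ) := by
    intro l hli hlj
    rw [hg, Function.update_of_ne hlj, Function.update_of_ne hli]
  have key : ∀ G : Fin N → ℝ, (∀ l, l ≠ i → l ≠ j → G l = 1) →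
      ∏ l, G l = G i * G j := by
    intro G hG
    rw [← Finset.prod_pair hij]
    refine (Finset.prod_subset (Finset.subset_univ _) fun l _ hl => ?_).symm
    simp only [Finset.mem_insert, Finset.mem_singleton, not_or] at hl
    exact hG l hl.1 hl.2
  have h1 : ∀ x : Fin N → ℝ × ℝ, f (x i) * h (x j) = ∏ l, g l (x l) := by
    intro x
    rw [key (fun l => g l (x l)) (fun l h1 h2 => by
      show g l (x l) = 1; rw [hother l h1 h2]), hgi, hgj]
  simp_rw [h1]
  rw [pi_integral_prod ν g,
    key (fun l => ∫ y, g l y ∂(ν l)) (fun l h1 h2 => by simp [hother l h1 h2]), hgi, hgj]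

lemma pi_integrable_mul {i j : Fin N} (hij : i ≠ j) (f h : (ℝ × ℝ) → ℝ)
    (hf : Integrable f (ν i)) (hh : Integrable h (ν j)) :
    Integrable (fun x : Fin N → ℝ × ℝ => f (x i) * h (x j)) (Measure.pi ν) := by
  classical
  set g : Fin N → (ℝ × ℝ) → ℝ :=
    Function.update (Function.update (fun _ _ => (1 : ℝ)) i f) j h with hg
  have hgi : g i = f := by
    rw [hg, Function.update_of_ne hij, Function.update_self]
  have hgj : g j = h := by rw [hg, Function.update_self]
  have hother : ∀ l, l ≠ i → l ≠ j → g l = fun _ => (1 : ℝ) := by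
    intro l hli hlj
    rw [hg, Function.update_of_ne hlj, Function.update_of_ne hli]
  have key : ∀ G : Fin N → ℝ, (∀ l, l ≠ i → l ≠ j → G l = 1) →
      ∏ l, G l = G i * G j := by
    intro G hG
    rw [← Finset.prod_pair hij]
    refine (Finset.prod_subset (Finset.subset_univ _) fun l _ hl => ?_).symm
    simp only [Finset.mem_insert, Finset.mem_singleton, not_or] at hl
    exact hG l hl.1 hl.2
  have h1 : ∀ x : Fin N → ℝ × ℝ, f (x i) * h (x j) = ∏ l, g l (x l) := by
    intro x
    rw [key (fun l => g l (x l)) (fun l h1 h2 => by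
      show g l (x l) = 1; rw [hother l h1 h2]), hgi, hgj]
  have : Integrable (fun x : Fin N → ℝ × ℝ => ∏ l, g l (x l)) (Measure.pi ν) := by
    apply pi_integrable_prod
    intro l
    rcases eq_or_ne l i with rfl | hli
    · rwa [hgi]
    rcases eq_or_ne l j with rfl | hlj
    · rwa [hgj]
    · rw [hother l hli hlj]; exact integrable_const 1
  exact this.congr (Filter.Eventually.of_forall fun x => (h1 x).symm)

/-- Variance of a sum of coordinate functions over a product measure. -/
lemma Var_pi_sum (f : Fin N → (ℝ × ℝ) → ℝ) (hf : ∀ j, MemLp (f j) 2 (ν j)) :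
    Var (Measure.pi ν) (fun x => ∑ j, f j (x j)) = ∑ j, Var (ν j) (f j) := by
  classical
  have hint : ∀ j, Integrable (f j) (ν j) := fun j => (hf j).integrable one_le_two
  have hsq : ∀ j, Integrable (fun y => f j y ^ 2) (ν j) := fun j => (hf j).integrable_sq
  set m : Fin N → ℝ := fun j => ∫ y, f j y ∂(ν j) with hm
  set s : Fin N → ℝ := fun j => ∫ y, f j y ^ 2 ∂(ν j) with hs
  have h1 : ∫ x, (∑ j, f j (x j)) ∂(Measure.pi ν) = ∑ j, m j := by
    rw [integral_finset_sum _ fun j _ => pi_integrable_coord ν j (f j) (hint j)]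
    exact Finset.sum_congr rfl fun j _ => pi_integral_coord ν j (f j)
  have h2 : ∫ x, (∑ j, f j (x j)) ^ 2 ∂(Measure.pi ν)
      = ∑ j, ∑ i, (if j = i then s j else m j * m i) := by
    have e : ∀ x : Fin N → ℝ × ℝ,
        (∑ j, f j (x j)) ^ 2 = ∑ j, ∑ i, f j (x j) * f i (x i) := by
      intro x; rw [sq, Finset.sum_mul_sum]
    simp_rw [e]
    rw [integral_finset_sum]
    · refine Finset.sum_congr rfl fun j _ => ?_
      rw [integral_finset_sum]
      · refine Finset.sum_congr rfl fun i _ => ?_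
        rcases eq_or_ne j i with rfl | hji
        · simp only [if_pos rfl]
          simp_rw [← pow_two]
          exact pi_integral_coord ν j (fun y => f j y ^ 2)
        · rw [if_neg hji]
          exact pi_integral_mul ν hji (f j) (f i)
      · intro i _
        rcases eq_or_ne j i with rfl | hji
        · simpa only [← pow_two] using
            pi_integrable_coord ν j (fun y => f j y ^ 2) (hsq j)
        · exact pi_integrable_mul ν hji (f j) (f i) (hint j) (hint i)
    · intro j _
      apply integrable_finset_sum
      intro i _
      rcases eq_or_ne j i with rfl | hji
      · simpa only [← pow_two] using
          pi_integrable_coord ν j (fun y => f j y ^ 2) (hsq j)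
      · exact pi_integrable_mul ν hji (f j) (f i) (hint j) (hint i)
  have h3 : (∑ j, m j) ^ 2 = ∑ j, ∑ i, m j * m i := by rw [sq, Finset.sum_mul_sum]
  show (∫ x, (∑ j, f j (x j)) ^ 2 ∂(Measure.pi ν))
      - (∫ x, (∑ j, f j (x j)) ∂(Measure.pi ν)) ^ 2 = _
  rw [h1, h2, h3, ← Finset.sum_sub_distrib]
  refine Finset.sum_congr rfl fun j _ => ?_
  rw [← Finset.sum_sub_distrib,
    Finset.sum_eq_single j (fun i _ hij => by rw [if_neg (Ne.symm hij), sub_self])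
      (by simp)]
  rw [if_pos rfl]
  show s j - m j * m j = s j - m j ^ 2
  rw [pow_two]

end Coord

/-- Variance of a finite mixture dominates the mixture of variances. -/
lemma Var_mixture_ge {α : Type} [MeasurableSpace α] {K : Type} [Fintype K]
    (π : K → Measure α) [∀ k, IsProbabilityMeasure (π k)]
    (q : K → NNReal) (hq : ∑ k, q k = 1) (f : α → ℝ)
    (hfi : ∀ k, Integrable f (π k)) (hfs : ∀ k, Integrable (fun x => f x ^ 2) (π k)) :
    Var (∑ k, (q k : ENNReal) • π k) f ≥ ∑ k, (q k : ℝ) * Var (π k) f := by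
  classical
  have hq' : ∑ k, (q k : ℝ) = 1 := by exact_mod_cast congrArg NNReal.toReal hq
  have key : ∀ g : α → ℝ, (∀ k, Integrable g (π k)) →
      ∫ x, g x ∂(∑ k, (q k : ENNReal) • π k) = ∑ k, (q k : ℝ) * ∫ x, g x ∂(π k) := by
    intro g hg
    rw [integral_finset_sum_measure fun k _ => (hg k).smul_measure ENNReal.coe_ne_top]
    refine Finset.sum_congr rfl fun k _ => ?_
    rw [integral_smul_measure]
    simp
  set m : K → ℝ := fun k => ∫ x, f x ∂(π k) with hm
  have cs : (∑ k, (q k : ℝ) * m k) ^ 2 ≤ ∑ k, (q k : ℝ) * m k ^ 2 := by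
    have := Finset.sum_mul_sq_le_sq_mul_sq Finset.univ
      (fun k => Real.sqrt (q k)) (fun k => Real.sqrt (q k) * m k)
    have e1 : ∀ k : K, Real.sqrt (q k) * (Real.sqrt (q k) * m k) = (q k : ℝ) * m k := by
      intro k
      rw [← mul_assoc, ← pow_two, Real.sq_sqrt (q k).coe_nonneg]
    have e2 : ∀ k : K, Real.sqrt (q k) ^ 2 = (q k : ℝ) := fun k => Real.sq_sqrt (q k).coe_nonneg
    have e3 : ∀ k : K, (Real.sqrt (q k) * m k) ^ 2 = (q k : ℝ) * m k ^ 2 := by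
      intro k; rw [mul_pow, e2]
    simp_rw [e1, e2, e3, hq', one_mul] at this
    exact this
  show (∫ x, f x ^ 2 ∂_) - (∫ x, f x ∂_) ^ 2 ≥ _
  rw [key f hfi, key (fun x => f x ^ 2) hfs]
  have : ∑ k, (q k : ℝ) * Var (π k) f
      = ∑ k, (q k : ℝ) * ∫ x, f x ^ 2 ∂(π k) - ∑ k, (q k : ℝ) * m k ^ 2 := by
    rw [← Finset.sum_sub_distrib]
    exact Finset.sum_congr rfl fun k _ => by rw [Var]; ring
  rw [this]
  have := cs
  linarith

lemma Var_const_mul {α : Type} [MeasurableSpace α] (μ : Measure α) (f : α → ℝ) (c : ℝ) :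
    Var μ (fun x => c * f x) = c ^ 2 * Var μ f := by
  simp only [Var, mul_pow, integral_const_mul]
  ring

lemma pi_integrable_sum {N : ℕ} (ν : Fin N → Measure (ℝ × ℝ))
    [∀ j, IsProbabilityMeasure (ν j)] (f : Fin N → (ℝ × ℝ) → ℝ)
    (hf : ∀ j, Integrable (f j) (ν j)) :
    Integrable (fun x : Fin N → ℝ × ℝ => ∑ j, f j (x j)) (Measure.pi ν) :=
  integrable_finset_sum _ fun j _ => pi_integrable_coord ν j (f j) (hf j)

lemma pi_integrable_sq_sum {N : ℕ} (ν : Fin N → Measure (ℝ × ℝ))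
    [∀ j, IsProbabilityMeasure (ν j)] (f : Fin N → (ℝ × ℝ) → ℝ)
    (hf : ∀ j, MemLp (f j) 2 (ν j)) :
    Integrable (fun x : Fin N → ℝ × ℝ => (∑ j, f j (x j)) ^ 2) (Measure.pi ν) := by
  classical
  have e : (fun x : Fin N → ℝ × ℝ => (∑ j, f j (x j)) ^ 2)
      = fun x => ∑ j, ∑ i, f j (x j) * f i (x i) :=
    funext fun x => by rw [sq, Finset.sum_mul_sum]
  rw [e]
  refine integrable_finset_sum _ fun j _ => integrable_finset_sum _ fun i _ => ?_
  rcases eq_or_ne j i with rfl | hji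
  · simpa only [← pow_two] using
      pi_integrable_coord ν j (fun y => f j y ^ 2) ((hf j).integrable_sq)
  · exact pi_integrable_mul ν hji (f j) (f i)
      ((hf j).integrable one_le_two) ((hf i).integrable one_le_two)

/-- Classical phase-space form of **Theorem 3.1**: for a finite mixture
`μ = Σ_k q_k ⊗_j ν_{jk}` of product probability measures on `(ℝ²)^N` whose components
satisfy `Var(x) + Var(p) ≥ 1/2`, the EPR-type combinations `u = Σ_j x_j` and
`v = Σ_j (−1)^j p_j` satisfy `Var_μ(u) + Var_μ(v) ≥ N/2`. -/
theorem mixture_total_variance_ge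
    {N : ℕ} (hN : 1 ≤ N) {K : Type} [Fintype K]
    (ν : K → Fin N → Measure (ℝ × ℝ))
    [∀ k j, IsProbabilityMeasure (ν k j)]
    (hx2 : ∀ k j, MemLp (fun y : ℝ × ℝ => y.1) 2 (ν k j))
    (hp2 : ∀ k j, MemLp (fun y : ℝ × ℝ => y.2) 2 (ν k j))
    (q : K → NNReal) (hq : ∑ k, q k = 1)
    (μ : Measure (Fin N → ℝ × ℝ))
    (hμ : μ = ∑ k, (q k : ENNReal) • Measure.pi (fun j => ν k j))
    (hvar : ∀ k j,
      Var (ν k j) (fun y => y.1) + Var (ν k j) (fun y => y.2) ≥ 1 / 2) :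
    Var μ (fun x => ∑ j, (x j).1)
      + Var μ (fun x => ∑ j : Fin N, (-1 : ℝ) ^ ((j : ℕ) + 1) * (x j).2)
      ≥ (N : ℝ) / 2 := by
  classical
  subst hμ
  set π : K → Measure (Fin N → ℝ × ℝ) := fun k => Measure.pi (fun j => ν k j) with hπ
  haveI : ∀ k, IsProbabilityMeasure (π k) := fun k =>
    inferInstanceAs (IsProbabilityMeasure (Measure.pi (fun j => ν k j)))
  set fu : Fin N → (ℝ × ℝ) → ℝ := fun _ y => y.1 with hfu
  set fv : Fin N → (ℝ × ℝ) → ℝ := fun j y => (-1 : ℝ) ^ ((j : ℕ) + 1) * y.2 with hfv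
  have hfu2 : ∀ k j, MemLp (fu j) 2 (ν k j) := fun k j => hx2 k j
  have hfv2 : ∀ k j, MemLp (fv j) 2 (ν k j) := fun k j => (hp2 k j).const_mul _
  -- variances under each product measure
  have hVu : ∀ k, Var (π k) (fun x => ∑ j, fu j (x j)) = ∑ j, Var (ν k j) (fu j) :=
    fun k => Var_pi_sum (fun j => ν k j) fu (hfu2 k)
  have hVv : ∀ k, Var (π k) (fun x => ∑ j, fv j (x j)) = ∑ j, Var (ν k j) (fv j) :=
    fun k => Var_pi_sum (fun j => ν k j) fv (hfv2 k)
  -- mixture bounds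
  have hmixu := Var_mixture_ge π q hq (fun x => ∑ j, fu j (x j))
    (fun k => pi_integrable_sum _ fu (fun j => (hfu2 k j).integrable one_le_two))
    (fun k => pi_integrable_sq_sum _ fu (hfu2 k))
  have hmixv := Var_mixture_ge π q hq (fun x => ∑ j, fv j (x j))
    (fun k => pi_integrable_sum _ fv (fun j => (hfv2 k j).integrable one_le_two))
    (fun k => pi_integrable_sq_sum _ fv (hfv2 k))
  -- per-component lower bound
  have hcomp : ∀ k, ∑ j, Var (ν k j) (fu j) + ∑ j, Var (ν k j) (fv j) ≥ (N : ℝ) / 2 := by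
    intro k
    have : ∀ j : Fin N, Var (ν k j) (fv j) = Var (ν k j) (fun y => y.2) := by
      intro j
      have hc : ((-1 : ℝ) ^ ((j : ℕ) + 1)) ^ 2 = 1 := by
        rw [← pow_mul, mul_comm, pow_mul, neg_one_sq, one_pow]
      rw [hfv]
      rw [Var_const_mul (ν k j) (fun y => y.2) ((-1 : ℝ) ^ ((j : ℕ) + 1)), hc, one_mul]
    simp_rw [this]
    rw [← Finset.sum_add_distrib]
    calc ∑ j : Fin N, (Var (ν k j) (fu j) + Var (ν k j) (fun y => y.2))
        ≥ ∑ j : Fin N, (1 : ℝ) / 2 :=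
          Finset.sum_le_sum (fun j _ => hvar k j)
      _ = (N : ℝ) / 2 := by simp [Finset.sum_const]; ring
  -- conclude
  have hq' : ∑ k, (q k : ℝ) = 1 := by exact_mod_cast congrArg NNReal.toReal hq
  have hbound : ∑ k, (q k : ℝ) * Var (π k) (fun x => ∑ j, fu j (x j))
      + ∑ k, (q k : ℝ) * Var (π k) (fun x => ∑ j, fv j (x j)) ≥ (N : ℝ) / 2 := by
    rw [← Finset.sum_add_distrib]
    calc ∑ k, ((q k : ℝ) * Var (π k) (fun x => ∑ j, fu j (x j))
            + (q k : ℝ) * Var (π k) (fun x => ∑ j, fv j (x j)))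
        = ∑ k, (q k : ℝ) * (Var (π k) (fun x => ∑ j, fu j (x j))
            + Var (π k) (fun x => ∑ j, fv j (x j))) := by
          refine Finset.sum_congr rfl fun k _ => by ring
      _ ≥ ∑ k, (q k : ℝ) * ((N : ℝ) / 2) := by
          refine Finset.sum_le_sum fun k _ => ?_
          have := hcomp k
          rw [hVu k, hVv k]
          exact mul_le_mul_of_nonneg_left (by linarith [hcomp k]) (q k).coe_nonneg
      _ = (N : ℝ) / 2 := by rw [← Finset.sum_mul, hq', one_mul]
  have goal_u : Var (∑ k, (q k : ENNReal) • π k) (fun x => ∑ j, (x j).1)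
      = Var (∑ k, (q k : ENNReal) • π k) (fun x => ∑ j, fu j (x j)) := rfl
  have goal_v : Var (∑ k, (q k : ENNReal) • π k)
        (fun x => ∑ j : Fin N, (-1 : ℝ) ^ ((j : ℕ) + 1) * (x j).2)
      = Var (∑ k, (q k : ENNReal) • π k) (fun x => ∑ j, fv j (x j)) := rfl
  rw [goal_u, goal_v]
  linarith [hmixu, hmixv, hbound]
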